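/- Assume the continuum hypothesis (Cardinal.continuum = Cardinal.aleph 1). Then there exists a P-point ultrafilter on ℕ. -/

import Mathlib

/-- A P-point: a free (nonprincipal) ultrafilter `U` on `ℕ` such that every
function `ℕ → ℕ` is constant or finite-to-one on some set of `U`. -/
def IsPPoint (U : Ultrafilter ℕ) : Prop :=
  (∀ k : ℕ, U ≠ pure k) ∧
    ∀ f : ℕ → ℕ, ∃ A ∈ U,
      (∃ k : ℕ, ∀ n ∈ A, f n = k) ∨ ∀ k : ℕ, (A ∩ f ⁻¹' {k}).Finite

open Set Cardinal

private def Good (f : ℕ → ℕ) (s : Set ℕ) : Prop :=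
  (∃ k : ℕ, ∀ n ∈ s, f n = k) ∨ ∀ k : ℕ, (s ∩ f ⁻¹' {k}).Finite

private lemma refine_good (f : ℕ → ℕ) {C : Set ℕ} (hC : C.Infinite) :
    ∃ s, s ⊆ C ∧ s.Infinite ∧ Good f s := by
  by_cases h : ∃ k, (C ∩ f ⁻¹' {k}).Infinite
  · obtain ⟨k, hk⟩ := h
    exact ⟨C ∩ f ⁻¹' {k}, inter_subset_left, hk, Or.inl ⟨k, fun n hn => hn.2⟩⟩
  · push_neg at h
    exact ⟨C, subset_rfl, hC, Or.inr fun k => h k⟩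

private lemma pseudo {σ : Type} [Countable σ] (A : σ → Set ℕ)
    (h : ∀ s : Finset σ, (⋂ j ∈ s, A j).Infinite) :
    ∃ C : Set ℕ, C.Infinite ∧ ∀ j, (C \ A j).Finite := by
  classical
  cases isEmpty_or_nonempty σ with
  | inl he => exact ⟨Set.univ, Set.infinite_univ, fun j => (he.false j).elim⟩
  | inr hne =>
  obtain ⟨g, hg⟩ := exists_surjective_nat σ
  set B : ℕ → Set ℕ := fun n => ⋂ k ∈ Finset.range (n+1), A (g k) with hB
  have hBinf : ∀ n, (B n).Infinite := by
    intro n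
    refine Set.Infinite.mono ?_ (h ((Finset.range (n+1)).image g))
    intro x hx
    rw [Set.mem_iInter₂] at hx
    simp only [hB, Set.mem_iInter]
    intro k hk
    exact hx (g k) (Finset.mem_image_of_mem g hk)
  have hBsub : ∀ m n, m ≤ n → B n ⊆ A (g m) := by
    intro m n hmn x hx
    simp only [hB, Set.mem_iInter] at hx
    exact hx m (Finset.mem_range.mpr (Nat.lt_succ_of_le hmn))
  have key : ∀ x : ℕ, ∀ n : ℕ, ∃ y ∈ B n, x < y := fun x n => (hBinf n).exists_gt x
  choose F hF1 hF2 using key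
  set c : ℕ → ℕ := fun n => Nat.rec (F 0 0) (fun n ih => F ih (n+1)) n with hc
  have hcs : ∀ n, c (n+1) = F (c n) (n+1) := fun n => rfl
  have hmono : StrictMono c := strictMono_nat_of_lt_succ (fun n => by rw [hcs]; exact hF2 _ _)
  have hmem : ∀ n, c n ∈ B n := by
    intro n
    cases n with
    | zero => exact hF1 0 0
    | succ n => rw [hcs]; exact hF1 _ _
  refine ⟨Set.range c, Set.infinite_range_of_injective hmono.injective, ?_⟩
  intro j
  obtain ⟨m, rfl⟩ := hg j
  refine ((Set.finite_Iio m).image c).subset ?_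
  rintro x ⟨⟨n, rfl⟩, hx⟩
  refine ⟨n, ?_, rfl⟩
  by_contra hn
  simp only [Set.mem_Iio, not_lt] at hn
  exact hx (hBsub m n hn (hmem n))

private lemma chainFIP {σ : Type} [LinearOrder σ] (A : σ → Set ℕ)
    (h1 : ∀ j, (A j).Infinite) (h2 : ∀ j j', j' < j → (A j \ A j').Finite) :
    ∀ s : Finset σ, (⋂ j ∈ s, A j).Infinite := by
  intro s
  rcases s.eq_empty_or_nonempty with rfl | hs
  · simpa using Set.infinite_univ
  · set m := s.max' hs with hm
    have hsub : A m \ ⋃ j ∈ s, (A m \ A j) ⊆ ⋂ j ∈ s, A j := by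
      rintro x ⟨hxm, hx⟩
      simp only [Set.mem_iUnion, not_exists] at hx
      simp only [Set.mem_iInter]
      intro j hj
      by_contra hxj
      exact hx j hj ⟨hxm, hxj⟩
    refine Set.Infinite.mono hsub ?_
    refine Set.Infinite.diff (h1 m) ?_
    refine Set.Finite.biUnion s.finite_toSet ?_
    intro j hj
    rcases lt_or_eq_of_le (s.le_max' j hj) with hlt | heq
    · exact h2 m j hlt
    · rw [heq, ← hm, Set.diff_self]; exact Set.finite_empty

private lemma step {σ : Type} [LinearOrder σ] [Countable σ] (f : ℕ → ℕ) (A : σ → Set ℕ)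
    (h1 : ∀ j, (A j).Infinite) (h2 : ∀ j j', j' < j → (A j \ A j').Finite) :
    ∃ s : Set ℕ, s.Infinite ∧ (∀ j, (s \ A j).Finite) ∧ Good f s := by
  obtain ⟨C, hC, hCsub⟩ := pseudo A (chainFIP A h1 h2)
  obtain ⟨s, hsC, hs, hgood⟩ := refine_good f hC
  exact ⟨s, hs, fun j => (hCsub j).subset (diff_subset_diff_left hsC), hgood⟩

section Build

variable {ι : Type} [LinearOrder ι] [WellFoundedLT ι]

open scoped Classical in
private noncomputable def AStep (hcnt : ∀ i : ι, Countable ↥(Set.Iio i)) (e : ι → ℕ → ℕ)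
    (i : ι) (g : ∀ j, j < i → Set ℕ) : Set ℕ :=
  if h : (∀ j hj, (g j hj).Infinite) ∧
      ∀ j hj j' (hj' : j' < j), (g j hj \ g j' (hj'.trans hj)).Finite then
    Classical.choose (@step ↥(Set.Iio i) _ (hcnt i) (e i) (fun j => g j.1 j.2)
      (fun j => h.1 j.1 j.2) (fun j j' hlt => h.2 j.1 j.2 j'.1 hlt))
  else Set.univ

private noncomputable def buildA (hcnt : ∀ i : ι, Countable ↥(Set.Iio i)) (e : ι → ℕ → ℕ) :
    ι → Set ℕ :=
  WellFounded.fix wellFounded_lt (AStep hcnt e)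

private lemma buildA_spec (hcnt : ∀ i : ι, Countable ↥(Set.Iio i)) (e : ι → ℕ → ℕ) :
    ∀ i : ι, (buildA hcnt e i).Infinite ∧
      (∀ j, j < i → (buildA hcnt e i \ buildA hcnt e j).Finite) ∧
      Good (e i) (buildA hcnt e i) := by
  intro i
  induction i using WellFoundedLT.induction with
  | _ i IH =>
  have heq : buildA hcnt e i = AStep hcnt e i (fun j _ => buildA hcnt e j) :=
    WellFounded.fix_eq _ _ _
  have hH : (∀ j (hj : j < i), ((fun j (_ : j < i) => buildA hcnt e j) j hj).Infinite) ∧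
      ∀ j (hj : j < i) j' (hj' : j' < j),
        ((fun j (_ : j < i) => buildA hcnt e j) j hj \
          (fun j (_ : j < i) => buildA hcnt e j) j' (hj'.trans hj)).Finite :=
    ⟨fun j hj => (IH j hj).1, fun j hj j' hj' => (IH j hj).2.1 j' hj'⟩
  rw [heq, AStep, dif_pos hH]
  obtain ⟨h1, h2, h3⟩ := Classical.choose_spec (@step ↥(Set.Iio i) _ (hcnt i) (e i)
    (fun j => buildA hcnt e j.1)
    (fun j => hH.1 j.1 j.2) (fun j j' hlt => hH.2 j.1 j.2 j'.1 hlt))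
  exact ⟨h1, fun j hj => h2 ⟨j, hj⟩, h3⟩

end Build

theorem stmt_17' (ch : Cardinal.continuum = Cardinal.aleph 1) :
    ∃ U : Ultrafilter ℕ, (∀ k : ℕ, U ≠ pure k) ∧
    ∀ f : ℕ → ℕ, ∃ A ∈ U,
      (∃ k : ℕ, ∀ n ∈ A, f n = k) ∨ ∀ k : ℕ, (A ∩ f ⁻¹' {k}).Finite := by
  classical
  have ch0 : (Cardinal.continuum : Cardinal.{0}) = Cardinal.aleph 1 := by
    apply Cardinal.lift_injective
    rw [Cardinal.lift_continuum, Cardinal.lift_aleph]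
    simpa using ch
  set ι := (Cardinal.aleph 1).ord.ToType with hι
  have hmk : #ι = #(ℕ → ℕ) := by
    have h2 : #(ℕ → ℕ) = Cardinal.continuum := by
      rw [← Cardinal.aleph0_power_aleph0, ← Cardinal.mk_nat, Cardinal.power_def]
    rw [hι, Cardinal.mk_toType, Cardinal.card_ord, h2, ch0]
  obtain ⟨e⟩ := Cardinal.eq.mp hmk
  have hcnt : ∀ i : ι, Countable ↥(Set.Iio i) := fun i =>
    ((Cardinal.countable_iff_lt_aleph_one _).mpr (Cardinal.mk_Iio_ord_toType i)).to_subtype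
  set A : ι → Set ℕ := buildA hcnt (fun i => e i) with hA
  have hInv := buildA_spec hcnt (fun i => e i)
  have hA1 : ∀ i, (A i).Infinite := fun i => (hInv i).1
  have hA2 : ∀ j i, j < i → (A i \ A j).Finite := fun j i h => (hInv i).2.1 j h
  have hAg : ∀ i, Good (e i) (A i) := fun i => (hInv i).2.2
  obtain ⟨i0⟩ : Nonempty ι := ⟨e.symm fun _ => 0⟩
  have hmono : ∀ {i j : ι} {S : Set ℕ}, i ≤ j → (A i \ S).Finite → (A j \ S).Finite := by
    intro i j S hij hfin
    rcases lt_or_eq_of_le hij with h | rfl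
    · refine ((hA2 i j h).union hfin).subset ?_
      intro x hx
      by_cases hxi : x ∈ A i
      · exact Or.inr ⟨hxi, hx.2⟩
      · exact Or.inl ⟨hx.1, hxi⟩
    · exact hfin
  let F : Filter ℕ := {
    sets := {S | ∃ i, (A i \ S).Finite}
    univ_sets := ⟨i0, by simp⟩
    sets_of_superset := by
      rintro S T ⟨i, hi⟩ hST
      exact ⟨i, hi.subset (Set.diff_subset_diff_right hST)⟩
    inter_sets := by
      rintro S T ⟨i, hi⟩ ⟨j, hj⟩
      refine ⟨max i j, ?_⟩
      rw [Set.diff_inter]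
      exact (hmono (le_max_left i j) hi).union (hmono (le_max_right i j) hj) }
  have hmemF : ∀ S : Set ℕ, (∃ i, (A i \ S).Finite) → S ∈ F := fun S h => h
  haveI : F.NeBot := by
    rw [← Filter.forall_mem_nonempty_iff_neBot]
    rintro S ⟨i, hi⟩
    obtain ⟨x, hx1, hx2⟩ := ((hA1 i).diff hi).nonempty
    refine ⟨x, ?_⟩
    by_contra hxS
    exact hx2 ⟨hx1, hxS⟩
  obtain ⟨U, hU⟩ := Ultrafilter.exists_le F
  have hUmem : ∀ S, S ∈ F → S ∈ U := fun S h => hU h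
  refine ⟨U, ?_, ?_⟩
  · intro k hk
    have h1 : ({k}ᶜ : Set ℕ) ∈ U := by
      refine hUmem _ (hmemF _ ⟨i0, ((Set.finite_singleton k).subset ?_)⟩)
      intro x hx
      simpa using hx.2
    rw [hk] at h1
    simp at h1
  · intro f
    obtain ⟨i, rfl⟩ : ∃ i, e i = f := ⟨e.symm f, e.apply_symm_apply f⟩
    exact ⟨A i, hUmem _ (hmemF _ ⟨i, by simp⟩), hAg i⟩

/-- Under the continuum hypothesis there exists a P-point ultrafilter on `ℕ`. -/
theorem stmt_17 (ch : Cardinal.continuum = Cardinal.aleph 1) :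
    ∃ U : Ultrafilter ℕ, IsPPoint U := by
  obtain ⟨U, h1, h2⟩ := stmt_17' ch
  exact ⟨U, h1, h2⟩
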